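/- Let $p$ be an odd prime and $n$ even with $1<n<p-1$. Then the graph $\mathcal{G}^{(n)}$ on $\{1,\dots,p-1\}$ with $i\sim j$ iff ($i+j+n$ odd, $i+j+n<2p$, $n<i+j$, $i<j+n$, $j<n+i$) is connected. -/

import Mathlib

/-- Adjacency (possibly a loop) in the graph `𝒢⁽ⁿ⁾`: `V_j` is a non-projective
indecomposable summand of `V_i ⊗ V_n`. -/
def adjCond (p n i j : ℕ) : Prop :=
  Odd (i + j + n) ∧ i + j + n < 2 * p ∧ n < i + j ∧ i < j + n ∧ j < n + i

lemma adjCond_of {p n i j : ℕ}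
    (h : (i + j + n) % 2 = 1 ∧ i + j + n < 2 * p ∧ n < i + j ∧ i < j + n ∧ j < n + i) :
    adjCond p n i j :=
  ⟨Nat.odd_iff.mpr h.1, h.2.1, h.2.2.1, h.2.2.2.1, h.2.2.2.2⟩

lemma adjCond_symm {p n i j : ℕ} (h : adjCond p n i j) : adjCond p n j i := by
  obtain ⟨h1, h2, h3, h4, h5⟩ := h
  rw [Nat.odd_iff] at h1
  exact adjCond_of ⟨by omega, by omega, by omega, by omega, by omega⟩

/-- consecutive path in the middle range -/
lemma chain_to_hub (p n m : ℕ) (hn : n = 2 * m) (hm : 1 ≤ m) (hp : 2 * m + 2 ≤ p) :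
    ∀ i, m ≤ i → i ≤ p - m → Relation.ReflTransGen (adjCond p n) i m := by
  intro i hi
  induction i, hi using Nat.le_induction with
  | base => intro _; exact .refl
  | succ i hi ih =>
    intro hle
    have e : adjCond p n (i + 1) i := adjCond_of (by omega)
    exact .head e (ih (by omega))

/-- low vertices connect to the hub `m` -/
lemma low_to_hub (p n m : ℕ) (hn : n = 2 * m) (hm : 1 ≤ m) (hp : 2 * m + 2 ≤ p) :
    ∀ k i, m - i ≤ k → 1 ≤ i → i < m → Relation.ReflTransGen (adjCond p n) i m := by
  intro k
  induction k with
  | zero => intro i h1 h2 h3; omega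
  | succ k ih =>
    intro i hk h1 h2
    by_cases hc : 2 * m + 1 - i ≤ p - m
    · have e : adjCond p n i (2 * m + 1 - i) := adjCond_of (by omega)
      exact .head e (chain_to_hub p n m hn hm hp _ (by omega) hc)
    · have e1 : adjCond p n i (2 * m + 1 - i) := adjCond_of (by omega)
      have e2 : adjCond p n (2 * m + 1 - i) (2 * p - 2 * m - 1 - (2 * m + 1 - i)) :=
        adjCond_of (by omega)
      by_cases hc2 : m ≤ 2 * p - 2 * m - 1 - (2 * m + 1 - i)
      · exact .head e1 (.head e2 (chain_to_hub p n m hn hm hp _ hc2 (by omega)))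
      · exact .head e1 (.head e2 (ih _ (by omega) (by omega) (by omega)))

/-- every vertex connects to hub `m` -/
lemma to_hub (p n m : ℕ) (hn : n = 2 * m) (hm : 1 ≤ m) (hp : 2 * m + 2 ≤ p) :
    ∀ i, 1 ≤ i → i ≤ p - 1 → Relation.ReflTransGen (adjCond p n) i m := by
  intro i h1 h2
  by_cases hl : i < m
  · exact low_to_hub p n m hn hm hp m i (by omega) h1 hl
  · by_cases hmid : i ≤ p - m
    · exact chain_to_hub p n m hn hm hp i (by omega) hmid
    · have e : adjCond p n i (2 * p - 2 * m - 1 - i) := adjCond_of (by omega)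
      by_cases hc : m ≤ 2 * p - 2 * m - 1 - i
      · exact .head e (chain_to_hub p n m hn hm hp _ hc (by omega))
      · exact .head e (low_to_hub p n m hn hm hp m _ (by omega) (by omega) (by omega))

theorem connected_of_even (p n : ℕ) (hp : p.Prime) (hodd : Odd p)
    (hneven : Even n) (hn1 : 1 < n) (hn2 : n < p - 1) :
    ∀ i j : ℕ, 1 ≤ i → i ≤ p - 1 → 1 ≤ j → j ≤ p - 1 →
      Relation.ReflTransGen (adjCond p n) i j := by
  obtain ⟨c, hc⟩ := hneven
  have hp2 : 2 ≤ p := hp.two_le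
  have hn : n = 2 * c := by omega
  have hm : 1 ≤ c := by omega
  have hpc : 2 * c + 2 ≤ p := by omega
  intro i j hi1 hi2 hj1 hj2
  have h1 := to_hub p n c hn hm hpc i hi1 hi2
  have h2 := to_hub p n c hn hm hpc j hj1 hj2
  exact h1.trans ((@Relation.ReflTransGen.symmetric _ (adjCond p n) ⟨fun _ _ h => adjCond_symm h⟩).symm _ _ h2)
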